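/- arXiv:1505.00062 — 4 statements merged into one kernel-verified Lean document; each statement's English description precedes it below -/
import Mathlib

section
/- Let K ≥ 1 be an integer, let S ⊆ T be finite nonempty sets of points in the half-open interval [0,1) (representing node positions on the unit circle), and let h : Fin K → [0,1) be the K key hashes. For a finite nonempty set A ⊆ [0,1) and a point u ∈ [0,1), let dist_A(u) = min_{t ∈ A} fract(t − u) denote the minimal forward distance from u to A, and let succ_A(u) denote the unique element t of A attaining this minimum. Define the multi-probe assignment assign_A(h) = succ_A(h_{j*}) where j* is an index minimizing j ↦ dist_A(h_j). Suppose j* is the strict (unique) minimizer of j ↦ dist_T(h_j), i.e. dist_T(h_j) > dist_T(h_{j*}) for all j ≠ j*. If assign_T(h) ∈ S, then j* is also the strict minimizer of j ↦ dist_S(h_j) and assign_S(h) = assign_T(h). (Monotonicity of multi-probe consistent hashing: removing nodes other than the assigned node does not change the assignment.) -/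
/-- The forward distance on the unit circle from `u` to `t`, for `u, t ∈ [0,1)`:
`t - u` if `t ≥ u`, and `t - u + 1` otherwise. -/
noncomputable def fwdDist (u t : ℝ) : ℝ := Int.fract (t - u)

/-- The minimal forward distance from a point `u` to a finite nonempty set `A`. -/
noncomputable def distToSet (A : Finset ℝ) (u : ℝ) : ℝ :=
  sInf ((fun t => fwdDist u t) '' (A : Set ℝ))

/-- Monotonicity of multi-probe consistent hashing: let `S ⊆ T` be finite nonempty
sets of node positions in `[0,1)` and let `h : Fin K → [0,1)` be the `K ≥ 1` key
hashes.  Suppose `j⋆` is the strict minimizer of `j ↦ distToSet T (h j)`, and `a`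
is the successor in `T` of `h j⋆` (the element of `T` minimizing the forward
distance from `h j⋆`), so that `a = assign_T h`.  If `a ∈ S`, then `j⋆` is also
the strict minimizer of `j ↦ distToSet S (h j)`, and any successor in `S` of
`h j⋆` equals `a`, i.e. `assign_S h = assign_T h`. -/
theorem multiprobe_consistent_hash_monotone
    (K : ℕ) (hK : 1 ≤ K)
    (S T : Finset ℝ) (hST : S ⊆ T) (hS : S.Nonempty)
    (hT01 : ∀ t ∈ T, t ∈ Set.Ico (0 : ℝ) 1)
    (h : Fin K → ℝ) (hh : ∀ j, h j ∈ Set.Ico (0 : ℝ) 1)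
    (jstar : Fin K)
    (hjstar : ∀ j : Fin K, j ≠ jstar → distToSet T (h jstar) < distToSet T (h j))
    (a : ℝ) (haT : a ∈ T)
    (hamin : ∀ t ∈ T, fwdDist (h jstar) a ≤ fwdDist (h jstar) t)
    (haS : a ∈ S) :
    (∀ j : Fin K, j ≠ jstar → distToSet S (h jstar) < distToSet S (h j)) ∧
      ∀ b ∈ S, (∀ t ∈ S, fwdDist (h jstar) b ≤ fwdDist (h jstar) t) → b = a := by
  have hdS : distToSet S (h jstar) = fwdDist (h jstar) a := by
    apply le_antisymm
    · exact csInf_le ((S.finite_toSet.image _).bddBelow) ⟨a, haS, rfl⟩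
    · apply le_csInf (Set.Nonempty.image _ ⟨a, haS⟩)
      rintro x ⟨t, htS, rfl⟩
      exact hamin t (hST htS)
  have hdT : distToSet T (h jstar) = fwdDist (h jstar) a := by
    apply le_antisymm
    · exact csInf_le ((T.finite_toSet.image _).bddBelow) ⟨a, haT, rfl⟩
    · apply le_csInf (Set.Nonempty.image _ ⟨a, haT⟩)
      rintro x ⟨t, htT, rfl⟩
      exact hamin t htT
  have hmono : ∀ j, distToSet T (h j) ≤ distToSet S (h j) := by
    intro j
    apply le_csInf (Set.Nonempty.image _ ⟨a, haS⟩)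
    rintro x ⟨t, htS, rfl⟩
    exact csInf_le ((T.finite_toSet.image _).bddBelow) ⟨t, hST htS, rfl⟩
  refine ⟨fun j hj => ?_, fun b hbS hbmin => ?_⟩
  · calc distToSet S (h jstar) = distToSet T (h jstar) := by rw [hdS, hdT]
      _ < distToSet T (h j) := hjstar j hj
      _ ≤ distToSet S (h j) := hmono j
  · have h1 : fwdDist (h jstar) b = fwdDist (h jstar) a :=
      le_antisymm (hbmin a haS) (hamin b (hST hbS))
    have hb01 := hT01 b (hST hbS)
    have ha01 := hT01 a haT
    have hfr : Int.fract (b - h jstar) = Int.fract (a - h jstar) := h1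
    rw [Int.fract_eq_fract] at hfr
    obtain ⟨z, hz⟩ := hfr
    have hzr : (z : ℝ) = b - a := by linarith
    have hz1 : (z : ℝ) < 1 := by rw [hzr]; linarith [ha01.1, hb01.2]
    have hz2 : (-1 : ℝ) < z := by rw [hzr]; linarith [ha01.2, hb01.1]
    have hz1' : z < 1 := by exact_mod_cast hz1
    have hz2' : -1 < z := by exact_mod_cast hz2
    have : z = 0 := by omega
    rw [this] at hzr
    simp at hzr
    linarith
end

section
/- Let K ≥ 2 and n ≥ 1 be integers, let b ≥ 0, and let x, x' : Fin n → ℝ be families of nonnegative reals that agree in every coordinate except the k-th, with x_k ≤ b and x'_k ≤ b. Define G(t) = Σ_{i=1}^n max(x_i − t, 0) and G'(t) = Σ_{i=1}^n max(x'_i − t, 0) for t ∈ [0,1]. Then |K∫_0^1 G(t)^{K−1} dt − K∫_0^1 G'(t)^{K−1} dt| ≤ K(K−1) · b · ∫_0^1 (max(G(t), G'(t)))^{K−2} dt. (The bounded-differences constant c_k for the peak-load functional Z_K.) -/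
open Finset intervalIntegral

lemma pl_abs_pow_sub_pow_le (a c : ℝ) (ha : 0 ≤ a) (hc : 0 ≤ c) (m : ℕ) :
    |a ^ m - c ^ m| ≤ m * (max a c) ^ (m - 1) * |a - c| := by
  set M := max a c with hM
  have hMa : a ≤ M := le_max_left _ _
  have hMc : c ≤ M := le_max_right _ _
  have h0M : 0 ≤ M := le_trans ha hMa
  have key : a ^ m - c ^ m = (∑ i ∈ range m, a ^ i * c ^ (m - 1 - i)) * (a - c) :=
    (geom_sum₂_mul a c m).symm
  rw [key, abs_mul]
  gcongr
  calc |∑ i ∈ range m, a ^ i * c ^ (m - 1 - i)|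
      ≤ ∑ i ∈ range m, |a ^ i * c ^ (m - 1 - i)| := Finset.abs_sum_le_sum_abs _ _
    _ ≤ ∑ _i ∈ range m, M ^ (m - 1) := by
        apply Finset.sum_le_sum
        intro i hi
        rw [Finset.mem_range] at hi
        rw [abs_mul, abs_pow, abs_pow, abs_of_nonneg ha, abs_of_nonneg hc]
        calc a ^ i * c ^ (m - 1 - i) ≤ M ^ i * M ^ (m - 1 - i) := by gcongr
          _ = M ^ (m - 1) := by rw [← pow_add]; congr 1; omega
    _ = m * M ^ (m - 1) := by rw [Finset.sum_const, card_range, nsmul_eq_mul]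

/-- Bounded-differences estimate for the peak-load functional `Z_K`.
If the nonnegative spacing families `x` and `x'` agree except in the `k`-th
coordinate, where both `x k ≤ b` and `x' k ≤ b`, then with
`G t = Σ i, max (x i − t) 0` and `G' t = Σ i, max (x' i − t) 0`,
`|K∫₀¹ G^{K−1} − K∫₀¹ G'^{K−1}| ≤ K(K−1)·b·∫₀¹ (max G G')^{K−2}`. -/
theorem peak_load_bounded_difference
    (K n : ℕ) (hK : 2 ≤ K) (hn : 1 ≤ n)
    (b : ℝ) (hb : 0 ≤ b)
    (x x' : Fin n → ℝ) (hx : ∀ i, 0 ≤ x i) (hx' : ∀ i, 0 ≤ x' i)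
    (k : Fin n) (hagree : ∀ i, i ≠ k → x i = x' i)
    (hxk : x k ≤ b) (hx'k : x' k ≤ b) :
    |(K : ℝ) * (∫ t in (0 : ℝ)..1, (∑ i, max (x i - t) 0) ^ (K - 1)) -
        (K : ℝ) * (∫ t in (0 : ℝ)..1, (∑ i, max (x' i - t) 0) ^ (K - 1))| ≤
      (K : ℝ) * ((K : ℝ) - 1) * b *
        ∫ t in (0 : ℝ)..1,
          (max (∑ i, max (x i - t) 0) (∑ i, max (x' i - t) 0)) ^ (K - 2) := by
  set G : ℝ → ℝ := fun t => ∑ i, max (x i - t) 0 with hGdef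
  set G' : ℝ → ℝ := fun t => ∑ i, max (x' i - t) 0 with hG'def
  have hGc : Continuous G :=
    continuous_finset_sum _ fun i _ => (continuous_const.sub continuous_id).max continuous_const
  have hG'c : Continuous G' :=
    continuous_finset_sum _ fun i _ => (continuous_const.sub continuous_id).max continuous_const
  have hGnn : ∀ t, 0 ≤ G t := fun t =>
    Finset.sum_nonneg fun i _ => le_max_right _ _
  have hG'nn : ∀ t, 0 ≤ G' t := fun t =>
    Finset.sum_nonneg fun i _ => le_max_right _ _
  have hdiff : ∀ t, |G t - G' t| ≤ b := by
    intro t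
    have h1 : G t - G' t = max (x k - t) 0 - max (x' k - t) 0 := by
      rw [hGdef, hG'def, ← Finset.sum_sub_distrib]
      apply Finset.sum_eq_single_of_mem k (Finset.mem_univ k)
      intro i _ hik
      rw [hagree i hik]; ring
    rw [h1]
    have h2 : |max (x k - t) 0 - max (x' k - t) 0| ≤ |(x k - t) - (x' k - t)| :=
      abs_max_sub_max_le_abs _ _ _
    have h3 : (x k - t) - (x' k - t) = x k - x' k := by ring
    rw [h3] at h2
    refine h2.trans ?_
    rw [abs_sub_le_iff]
    constructor <;> linarith [hx k, hx' k]
  set M : ℝ → ℝ := fun t => max (G t) (G' t) with hMdef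
  have hMc : Continuous M := hGc.max hG'c
  have hMnn : ∀ t, 0 ≤ M t := fun t => le_trans (hGnn t) (le_max_left _ _)
  have hptw : ∀ t, |G t ^ (K - 1) - G' t ^ (K - 1)| ≤ ((K : ℝ) - 1) * b * M t ^ (K - 2) := by
    intro t
    have := pl_abs_pow_sub_pow_le (G t) (G' t) (hGnn t) (hG'nn t) (K - 1)
    have hcast : ((K - 1 : ℕ) : ℝ) = (K : ℝ) - 1 := by
      push_cast [Nat.cast_sub (by omega : 1 ≤ K)]; ring
    have hidx : K - 1 - 1 = K - 2 := by omega
    rw [hidx, hcast] at this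
    refine this.trans ?_
    have hK1 : (0 : ℝ) ≤ (K : ℝ) - 1 := by
      have : (2 : ℝ) ≤ (K : ℝ) := by exact_mod_cast hK
      linarith
    calc ((K : ℝ) - 1) * M t ^ (K - 2) * |G t - G' t|
        ≤ ((K : ℝ) - 1) * M t ^ (K - 2) * b :=
          mul_le_mul_of_nonneg_left (hdiff t) (mul_nonneg hK1 (pow_nonneg (hMnn t) _))
      _ = ((K : ℝ) - 1) * b * M t ^ (K - 2) := by ring
  -- integrability
  have hint1 : IntervalIntegrable (fun t => G t ^ (K - 1)) MeasureTheory.volume 0 1 :=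
    (hGc.pow _).intervalIntegrable _ _
  have hint2 : IntervalIntegrable (fun t => G' t ^ (K - 1)) MeasureTheory.volume 0 1 :=
    (hG'c.pow _).intervalIntegrable _ _
  have hintM : IntervalIntegrable (fun t => M t ^ (K - 2)) MeasureTheory.volume 0 1 :=
    (hMc.pow _).intervalIntegrable _ _
  have step1 : (K : ℝ) * (∫ t in (0:ℝ)..1, G t ^ (K - 1)) -
      (K : ℝ) * (∫ t in (0:ℝ)..1, G' t ^ (K - 1)) =
      (K : ℝ) * ∫ t in (0:ℝ)..1, (G t ^ (K - 1) - G' t ^ (K - 1)) := by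
    rw [intervalIntegral.integral_sub hint1 hint2]; ring
  rw [step1, abs_mul, abs_of_nonneg (by positivity : (0:ℝ) ≤ (K : ℝ))]
  have step2 : |∫ t in (0:ℝ)..1, (G t ^ (K - 1) - G' t ^ (K - 1))| ≤
      ∫ t in (0:ℝ)..1, ((K : ℝ) - 1) * b * M t ^ (K - 2) := by
    refine (intervalIntegral.abs_integral_le_integral_abs (by norm_num)).trans ?_
    apply intervalIntegral.integral_mono_on (by norm_num)
    · exact ((hGc.pow _).sub (hG'c.pow _)).abs.intervalIntegrable _ _
    · exact (hintM.const_mul _)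
    · intro t _; exact hptw t
  calc (K : ℝ) * |∫ t in (0:ℝ)..1, (G t ^ (K - 1) - G' t ^ (K - 1))|
      ≤ (K : ℝ) * ∫ t in (0:ℝ)..1, ((K : ℝ) - 1) * b * M t ^ (K - 2) :=
        mul_le_mul_of_nonneg_left step2 (by positivity)
    _ = (K : ℝ) * ((K : ℝ) - 1) * b * ∫ t in (0:ℝ)..1, M t ^ (K - 2) := by
        rw [intervalIntegral.integral_const_mul]; ring
end

section
/- Let S ⊆ [0,1) be a finite set with at least two elements, and for h ∈ [0,1) let succ_S(h) denote the unique element t of S minimizing the forward distance fract(t − h) over t ∈ S. Then for every t ∈ S, the Lebesgue measure of the set {h ∈ [0,1) : succ_S(h) = t} equals min_{s ∈ S, s ≠ t} fract(t − s). (A uniformly hashed key is assigned to node t with probability equal to the length of the arc from t's predecessor to t.) -/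
open MeasureTheory

private lemma fract_sub_mem (a b : ℝ) (ha : a ∈ Set.Ico (0:ℝ) 1) (hb : b ∈ Set.Ico (0:ℝ) 1) :
    Int.fract (a - b) = if b ≤ a then a - b else a - b + 1 := by
  obtain ⟨ha0, ha1⟩ := ha
  obtain ⟨hb0, hb1⟩ := hb
  split_ifs with h
  · exact Int.fract_eq_self.mpr ⟨by linarith, by linarith⟩
  · rw [← Int.fract_add_intCast (a - b) 1, show a - b + ((1:ℤ):ℝ) = a - b + 1 by push_cast; ring]
    exact Int.fract_eq_self.mpr ⟨by linarith, by linarith⟩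

private lemma key_iff (s t h : ℝ) (hs : s ∈ Set.Ico (0:ℝ) 1) (ht : t ∈ Set.Ico (0:ℝ) 1)
    (hh : h ∈ Set.Ico (0:ℝ) 1) (hst : s ≠ t) :
    Int.fract (t - h) ≤ Int.fract (s - h) ↔ Int.fract (t - h) < Int.fract (t - s) := by
  obtain ⟨hs0, hs1⟩ := hs
  obtain ⟨ht0, ht1⟩ := ht
  obtain ⟨hh0, hh1⟩ := hh
  rw [fract_sub_mem t h ⟨ht0, ht1⟩ ⟨hh0, hh1⟩, fract_sub_mem s h ⟨hs0, hs1⟩ ⟨hh0, hh1⟩,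
    fract_sub_mem t s ⟨ht0, ht1⟩ ⟨hs0, hs1⟩]
  rcases lt_or_gt_of_ne hst with h1 | h1 <;>
    split_ifs <;> constructor <;> intro <;> linarith

/-- Load of a node under ring consistent hashing: for a finite set `S ⊆ [0,1)` of
at least two node positions and `t ∈ S`, the Lebesgue measure of the set of key
hashes `h ∈ [0,1)` whose successor in `S` is `t` (i.e. `t` minimizes the forward
distance `Int.fract (· - h)` over `S`) equals the minimal forward distance
`Int.fract (t − s)` from the other nodes `s ∈ S` to `t`. -/
theorem measure_succ_eq_arc_length
    (S : Finset ℝ) (hS01 : ∀ s ∈ S, s ∈ Set.Ico (0 : ℝ) 1) (hcard : 2 ≤ S.card)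
    (t : ℝ) (ht : t ∈ S) :
    volume {h : ℝ | h ∈ Set.Ico (0 : ℝ) 1 ∧
        ∀ s ∈ S, Int.fract (t - h) ≤ Int.fract (s - h)} =
      ENNReal.ofReal
        ((S.erase t).inf' (by
            rw [← Finset.card_pos, Finset.card_erase_of_mem ht]; omega)
          fun s => Int.fract (t - s)) := by
  have hne : (S.erase t).Nonempty := by
    rw [← Finset.card_pos, Finset.card_erase_of_mem ht]; omega
  suffices H : volume {h : ℝ | h ∈ Set.Ico (0 : ℝ) 1 ∧
        ∀ s ∈ S, Int.fract (t - h) ≤ Int.fract (s - h)} =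
      ENNReal.ofReal ((S.erase t).inf' hne fun s => Int.fract (t - s)) by
    exact H
  set D : ℝ := (S.erase t).inf' hne fun s => Int.fract (t - s) with hD
  have ht01 := hS01 t ht
  obtain ⟨p, hp, hpd⟩ := Finset.exists_mem_eq_inf' hne (fun s => Int.fract (t - s))
  have hpt : p ≠ t := Finset.ne_of_mem_erase hp
  have hp01 := hS01 p (Finset.mem_of_mem_erase hp)
  have hpd' : D = Int.fract (t - p) := hpd
  have hd0 : 0 < D := by
    rw [hpd', fract_sub_mem t p ht01 hp01]
    rcases lt_or_gt_of_ne hpt with h1 | h1 <;> split_ifs <;>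
      linarith [hp01.1, hp01.2, ht01.1, ht01.2]
  have hd1 : D < 1 := by rw [hpd']; exact Int.fract_lt_one _
  have hset : {h : ℝ | h ∈ Set.Ico (0:ℝ) 1 ∧ ∀ s ∈ S, Int.fract (t - h) ≤ Int.fract (s - h)}
      = {h : ℝ | h ∈ Set.Ico (0:ℝ) 1 ∧ Int.fract (t - h) < D} := by
    ext h
    simp only [Set.mem_setOf_eq, and_congr_right_iff]
    intro hh
    rw [hD, Finset.lt_inf'_iff]
    constructor
    · intro H s hs
      exact (key_iff s t h (hS01 s (Finset.mem_of_mem_erase hs)) ht01 hh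
        (Finset.ne_of_mem_erase hs)).mp (H s (Finset.mem_of_mem_erase hs))
    · intro H s hs
      rcases eq_or_ne s t with rfl | hst
      · exact le_refl _
      · exact (key_iff s t h (hS01 s hs) ht01 hh hst).mpr
          (H s (Finset.mem_erase.mpr ⟨hst, hs⟩))
  rw [hset]
  rcases le_or_gt D t with hDt | hDt
  · have heq : {h : ℝ | h ∈ Set.Ico (0:ℝ) 1 ∧ Int.fract (t - h) < D} = Set.Ioc (t - D) t := by
      ext h
      simp only [Set.mem_setOf_eq, Set.mem_Ico, Set.mem_Ioc]
      constructor
      · rintro ⟨⟨hh0, hh1⟩, hfr⟩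
        rw [fract_sub_mem t h ht01 ⟨hh0, hh1⟩] at hfr
        split_ifs at hfr with hht
        · exact ⟨by linarith, hht⟩
        · linarith
      · rintro ⟨h1, h2⟩
        have hh : h ∈ Set.Ico (0:ℝ) 1 := ⟨by linarith, by linarith [ht01.2]⟩
        refine ⟨⟨hh.1, hh.2⟩, ?_⟩
        rw [fract_sub_mem t h ht01 hh]
        split_ifs <;> linarith
    rw [heq, Real.volume_Ioc, sub_sub_cancel]
  · have heq : {h : ℝ | h ∈ Set.Ico (0:ℝ) 1 ∧ Int.fract (t - h) < D}
        = Set.Icc 0 t ∪ Set.Ioo (t + 1 - D) 1 := by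
      ext h
      simp only [Set.mem_setOf_eq, Set.mem_Ico, Set.mem_Icc, Set.mem_Ioo, Set.mem_union]
      constructor
      · rintro ⟨⟨hh0, hh1⟩, hfr⟩
        rw [fract_sub_mem t h ht01 ⟨hh0, hh1⟩] at hfr
        split_ifs at hfr with hht
        · exact Or.inl ⟨hh0, hht⟩
        · exact Or.inr ⟨by linarith, hh1⟩
      · rintro (⟨h1, h2⟩ | ⟨h1, h2⟩)
        · have hh : h ∈ Set.Ico (0:ℝ) 1 := ⟨h1, by linarith [ht01.2]⟩
          refine ⟨⟨hh.1, hh.2⟩, ?_⟩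
          rw [fract_sub_mem t h ht01 hh]
          split_ifs <;> linarith
        · have hh : h ∈ Set.Ico (0:ℝ) 1 := ⟨by linarith [ht01.1], h2⟩
          refine ⟨⟨hh.1, hh.2⟩, ?_⟩
          rw [fract_sub_mem t h ht01 hh]
          split_ifs <;> linarith
    have hdisj : Disjoint (Set.Icc (0:ℝ) t) (Set.Ioo (t + 1 - D) 1) := by
      apply Set.disjoint_left.mpr
      rintro x ⟨_, hx2⟩ ⟨hx3, _⟩
      linarith
    rw [heq, measure_union hdisj measurableSet_Ioo, Real.volume_Icc, Real.volume_Ioo,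
      ← ENNReal.ofReal_add (by linarith [ht01.1]) (by linarith)]
    congr 1
    ring
end

section
/- Let J ≥ 1 be a natural number, μ > 0, and t ≥ J/μ. Then the Gamma distribution with shape parameter J and rate μ assigns to the interval [t, ∞) a measure at most exp(−(μt − J − J·ln(μt/J))). (Chernoff upper bound for the load of a node hashed J ways: the sum of J independent exponential spacings of rate μ exceeds t with probability at most e^{−I(t)} where I(t) = μt − J − J ln(μt/J).) -/
open MeasureTheory ProbabilityTheory

/-- Chernoff upper tail bound for the Gamma distribution with shape `J` and rate
`μ` (the law of the sum of `J` independent exponential spacings of rate `μ`):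
for `t ≥ J/μ`, the probability of `[t, ∞)` is at most
`exp(−(μ·t − J − J·ln(μ·t/J)))`. -/
theorem gamma_chernoff_tail_bound
    (J : ℕ) (hJ : 1 ≤ J) (mu : ℝ) (hmu : 0 < mu)
    (t : ℝ) (ht : (J : ℝ) / mu ≤ t) :
    gammaMeasure (J : ℝ) mu (Set.Ici t) ≤
      ENNReal.ofReal
        (Real.exp (-(mu * t - (J : ℝ) - (J : ℝ) * Real.log (mu * t / (J : ℝ))))) := by
  have hJpos : (0:ℝ) < (J:ℝ) := by exact_mod_cast hJ
  have ht0 : 0 < t := lt_of_lt_of_le (div_pos hJpos hmu) ht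
  set nu : ℝ := (J:ℝ) / t with hnu
  have hnu0 : 0 < nu := div_pos hJpos ht0
  have hnut : nu * t = (J:ℝ) := div_mul_cancel₀ _ ht0.ne'
  have hnule : nu ≤ mu := by
    rw [hnu, div_le_iff₀ ht0]
    rw [div_le_iff₀ hmu] at ht
    linarith
  set C : ℝ := (mu / nu) ^ (J:ℝ) * Real.exp (-((mu - nu) * t)) with hC
  have hCpos : 0 < C := by positivity
  -- pointwise bound on Ici t
  have hpt : ∀ x ∈ Set.Ici t, gammaPDF (J:ℝ) mu x ≤ ENNReal.ofReal C * gammaPDF (J:ℝ) nu x := by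
    intro x hx
    have hxt : t ≤ x := hx
    have hx0 : 0 ≤ x := ht0.le.trans hxt
    rw [gammaPDF_of_nonneg hx0, gammaPDF_of_nonneg hx0, ← ENNReal.ofReal_mul hCpos.le]
    apply ENNReal.ofReal_le_ofReal
    have hΓ : 0 < Real.Gamma (J:ℝ) := Real.Gamma_pos_of_pos hJpos
    have key : mu ^ (J:ℝ) * Real.exp (-(mu * x)) ≤
        C * (nu ^ (J:ℝ) * Real.exp (-(nu * x))) := by
      have h1 : mu ^ (J:ℝ) = (mu / nu) ^ (J:ℝ) * nu ^ (J:ℝ) := by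
        rw [← Real.mul_rpow (by positivity) hnu0.le, div_mul_cancel₀ _ hnu0.ne']
      have h2 : Real.exp (-(mu * x)) = Real.exp (-((mu - nu) * x)) * Real.exp (-(nu * x)) := by
        rw [← Real.exp_add]; ring_nf
      have h3 : Real.exp (-((mu - nu) * x)) ≤ Real.exp (-((mu - nu) * t)) := by
        apply Real.exp_le_exp.2
        have := mul_le_mul_of_nonneg_left hxt (sub_nonneg.2 hnule)
        linarith
      rw [h1, h2, hC]
      calc (mu / nu) ^ (J:ℝ) * nu ^ (J:ℝ) * (Real.exp (-((mu - nu) * x)) * Real.exp (-(nu * x)))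
          ≤ (mu / nu) ^ (J:ℝ) * nu ^ (J:ℝ) * (Real.exp (-((mu - nu) * t)) * Real.exp (-(nu * x))) := by
            apply mul_le_mul_of_nonneg_left _ (by positivity)
            exact mul_le_mul_of_nonneg_right h3 (Real.exp_pos _).le
        _ = (mu / nu) ^ (J:ℝ) * Real.exp (-((mu - nu) * t)) * (nu ^ (J:ℝ) * Real.exp (-(nu * x))) := by ring
    calc mu ^ (J:ℝ) / Real.Gamma (J:ℝ) * x ^ ((J:ℝ) - 1) * Real.exp (-(mu * x))
        = (mu ^ (J:ℝ) * Real.exp (-(mu * x))) * (x ^ ((J:ℝ) - 1) / Real.Gamma (J:ℝ)) := by ring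
      _ ≤ (C * (nu ^ (J:ℝ) * Real.exp (-(nu * x)))) * (x ^ ((J:ℝ) - 1) / Real.Gamma (J:ℝ)) := by
          apply mul_le_mul_of_nonneg_right key (by positivity)
      _ = C * (nu ^ (J:ℝ) / Real.Gamma (J:ℝ) * x ^ ((J:ℝ) - 1) * Real.exp (-(nu * x))) := by ring
  have hmeas : gammaMeasure (J:ℝ) mu (Set.Ici t) = ∫⁻ x in Set.Ici t, gammaPDF (J:ℝ) mu x := by
    rw [gammaMeasure, withDensity_apply _ measurableSet_Ici]
  have hmeas2 : (∫⁻ x in Set.Ici t, gammaPDF (J:ℝ) nu x) ≤ 1 := by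
    have : (∫⁻ x in Set.Ici t, gammaPDF (J:ℝ) nu x) ≤ ∫⁻ x, gammaPDF (J:ℝ) nu x :=
      setLIntegral_le_lintegral _ _
    rwa [lintegral_gammaPDF_eq_one hJpos hnu0] at this
  have hCexp : C = Real.exp (-(mu * t - (J:ℝ) - (J:ℝ) * Real.log (mu * t / (J:ℝ)))) := by
    have hq : (0:ℝ) < mu * t / (J:ℝ) := by positivity
    have h1 : (mu / nu) ^ (J:ℝ) = Real.exp ((J:ℝ) * Real.log (mu * t / (J:ℝ))) := by
      have : mu / nu = mu * t / (J:ℝ) := by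
        rw [hnu]; field_simp
      rw [this, ← Real.exp_log (Real.rpow_pos_of_pos hq _), Real.log_rpow hq]
    have h2 : (mu - nu) * t = mu * t - (J:ℝ) := by
      rw [sub_mul, hnut]
    rw [hC, h1, h2, ← Real.exp_add]; ring_nf
  calc gammaMeasure (J:ℝ) mu (Set.Ici t)
      = ∫⁻ x in Set.Ici t, gammaPDF (J:ℝ) mu x := hmeas
    _ ≤ ∫⁻ x in Set.Ici t, ENNReal.ofReal C * gammaPDF (J:ℝ) nu x := by
        refine setLIntegral_mono' measurableSet_Ici hpt
    _ = ENNReal.ofReal C * ∫⁻ x in Set.Ici t, gammaPDF (J:ℝ) nu x := by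
        rw [lintegral_const_mul]
        exact ENNReal.measurable_ofReal.comp (measurable_gammaPDFReal _ _)
    _ ≤ ENNReal.ofReal C * 1 := mul_le_mul_right hmeas2 _
    _ = ENNReal.ofReal (Real.exp (-(mu * t - (J:ℝ) - (J:ℝ) * Real.log (mu * t / (J:ℝ))))) := by
        rw [mul_one, hCexp]
end
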